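/- Let R be a commutative ring, Ã ∈ R^{l1×l0} and L̃ ∈ R^{l1'×l0'} matrices. Identify R^{1×l0} ⊗_R R^{1×l0'} with R^{1×l0·l0'} via eᵢ ⊗ eⱼ ↦ e_{(i−1)l0'+j}. Then coker(Ã) ⊗_R coker(L̃) is R-linearly isomorphic to coker(T), where T ∈ R^{(l1·l0'+l0·l1')×(l0·l0')} is the matrix obtained by stacking Ã ⊗ I_{l0'} on top of I_{l0} ⊗ L̃ (Kronecker products), the isomorphism sending (x + ⟨Ã⟩) ⊗ (y + ⟨L̃⟩) to the class of x ⊗ y. -/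

import Mathlib

open Matrix

section Preamble

variable {R : Type*} [Ring R]

/-- `⟨A⟩`: the left `R`-submodule of row vectors `R^{1×q}` generated by the rows
of the matrix `A`. -/
def rowSpan {m : Type*} {q : ℕ} (A : Matrix m (Fin q) R) : Submodule R (Fin q → R) :=
  Submodule.span R (Set.range A)

theorem rowSpan_le_iff {m : Type*} {q : ℕ} {A : Matrix m (Fin q) R}
    {N : Submodule R (Fin q → R)} : rowSpan A ≤ N ↔ ∀ i, A i ∈ N := by
  rw [rowSpan, Submodule.span_le]
  exact ⟨fun h i => h ⟨i, rfl⟩, fun h _ ⟨i, hi⟩ => hi ▸ h i⟩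

/-- A matrix `φ` with `⟨Aφ⟩ ≤ ⟨B⟩` induces an `R`-linear map
`coker A → coker B`, `x + ⟨A⟩ ↦ xφ + ⟨B⟩`. -/
def inducedMap {m m' : Type*} {q q' : ℕ} (A : Matrix m (Fin q) R) (B : Matrix m' (Fin q') R)
    (φ : Matrix (Fin q) (Fin q') R) (h : rowSpan (A * φ) ≤ rowSpan B) :
    ((Fin q → R) ⧸ rowSpan A) →ₗ[R] ((Fin q' → R) ⧸ rowSpan B) :=
  Submodule.mapQ _ _ φ.vecMulLinear (by
    rw [rowSpan, Submodule.span_le]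
    rintro _ ⟨i, rfl⟩
    have hAi : φ.vecMulLinear (A i) = (A * φ) i := by
      ext j
      simp [Matrix.vecMulLinear_apply, Matrix.mul_apply, Matrix.vecMul, dotProduct]
    have hmem := h (Submodule.subset_span ⟨i, rfl⟩)
    simp only [SetLike.mem_coe, Submodule.mem_comap, hAi]
    exact hmem)

end Preamble

/-- The row-major vectorization `row(A) ∈ R^{1×mn}` of a matrix `A ∈ R^{m×n}`:
`row(A)_{i·n+j} = A_{ij}` (`0`-indexed). -/
def rowVec {R : Type*} [Ring R] {m n : ℕ} (A : Matrix (Fin m) (Fin n) R) :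
    Fin (m * n) → R :=
  fun k => A (finProdFinEquiv.symm k).1 (finProdFinEquiv.symm k).2

/-- The Kronecker product `A ⊗ B := (a_{ij}B)`, reindexed so as to be indexed by
`Fin (m*p)` and `Fin (n*q)` in the row-major way. -/
def kron {R : Type*} [Ring R] {m n p q : ℕ} (A : Matrix (Fin m) (Fin n) R)
    (B : Matrix (Fin p) (Fin q) R) : Matrix (Fin (m * p)) (Fin (n * q)) R :=
  Matrix.reindex finProdFinEquiv finProdFinEquiv (Matrix.kroneckerMap (· * ·) A B)

/-- The row vector `x ⊗ y ∈ R^{1×ab}` corresponding to `x ∈ R^{1×a}`, `y ∈ R^{1×b}` under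
the row-major identification `R^{1×a} ⊗ R^{1×b} ≅ R^{1×ab}`, `eᵢ ⊗ eⱼ ↦ e_{i·b+j}`. -/
def tensorRow {R : Type*} [Ring R] {a b : ℕ} (x : Fin a → R) (y : Fin b → R) :
    Fin (a * b) → R :=
  fun k => x (finProdFinEquiv.symm k).1 * y (finProdFinEquiv.symm k).2


section Aux

open TensorProduct

variable {R : Type*} [CommRing R]

/-- `tensorRow` as a bilinear map. -/
def tensorRowBilin {a b : ℕ} :
    (Fin a → R) →ₗ[R] (Fin b → R) →ₗ[R] (Fin (a * b) → R) where
  toFun x :=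
    { toFun := tensorRow x
      map_add' := fun y z => by funext k; simp [tensorRow, mul_add]
      map_smul' := fun c y => by funext k; simp [tensorRow, mul_left_comm] }
  map_add' x z := by ext y k; simp [tensorRow, add_mul]
  map_smul' c x := by ext y k; simp [tensorRow, mul_assoc]

lemma tensorRow_single {a b : ℕ} (i : Fin a) (j : Fin b) :
    tensorRow (Pi.single i (1:R)) (Pi.single j (1:R))
      = Pi.single (finProdFinEquiv (i, j)) 1 := by
  funext k
  obtain ⟨⟨k1, k2⟩, rfl⟩ := finProdFinEquiv.surjective k
  have h : finProdFinEquiv.symm (finProdFinEquiv (k1, k2)) = (k1, k2) :=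
    Equiv.symm_apply_apply _ _
  have hd : (finProdFinEquiv (k1, k2) : Fin (a * b)).divNat = k1 :=
    congrArg Prod.fst h
  have hm : (finProdFinEquiv (k1, k2) : Fin (a * b)).modNat = k2 :=
    congrArg Prod.snd h
  simp only [tensorRow, hd, hm, Pi.single_apply, Equiv.apply_eq_iff_eq, Prod.ext_iff, ite_and]
  split_ifs <;> simp_all

/-- The row-major identification `R^{1×a} ⊗ R^{1×b} ≅ R^{1×ab}`. -/
noncomputable def rowTensorEquiv (a b : ℕ) :
    ((Fin a → R) ⊗[R] (Fin b → R)) ≃ₗ[R] (Fin (a * b) → R) :=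
  ((Pi.basisFun R (Fin a)).tensorProduct (Pi.basisFun R (Fin b))).equiv
    (Pi.basisFun R (Fin (a * b))) finProdFinEquiv

lemma rowTensorEquiv_toLinearMap (a b : ℕ) :
    (rowTensorEquiv a b (R := R)).toLinearMap = TensorProduct.lift tensorRowBilin := by
  apply Module.Basis.ext ((Pi.basisFun R (Fin a)).tensorProduct (Pi.basisFun R (Fin b)))
  rintro ⟨i, j⟩
  rw [Module.Basis.tensorProduct_apply]
  have h1 : (rowTensorEquiv a b (R := R))
      (((Pi.basisFun R (Fin a)).tensorProduct (Pi.basisFun R (Fin b))) (i, j))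
      = Pi.basisFun R (Fin (a * b)) (finProdFinEquiv (i, j)) :=
    Module.Basis.equiv_apply _ _ _ _
  rw [Module.Basis.tensorProduct_apply] at h1
  rw [LinearEquiv.coe_coe, h1]
  simp only [TensorProduct.lift.tmul, Pi.basisFun_apply]
  show _ = tensorRow (Pi.single i 1) (Pi.single j 1)
  rw [tensorRow_single]

lemma rowTensorEquiv_tmul {a b : ℕ} (x : Fin a → R) (y : Fin b → R) :
    rowTensorEquiv a b (x ⊗ₜ[R] y) = tensorRow x y := by
  have := congrFun (congrArg DFunLike.coe (rowTensorEquiv_toLinearMap a b (R := R)))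
    (x ⊗ₜ[R] y)
  simp at this; exact this

lemma tensorRow_mem_span {a b : ℕ} {m : Type*} (A : Matrix m (Fin a) R)
    {S : Submodule R (Fin (a * b) → R)}
    (hS : ∀ (i : m) (j : Fin b), tensorRow (A i) (Pi.single j (1:R)) ∈ S)
    {x : Fin a → R} (hx : x ∈ rowSpan A) (y : Fin b → R) :
    tensorRow x y ∈ S := by
  have key : ∀ x ∈ rowSpan A, ∀ y : Fin b → R, tensorRow x y ∈ S := by
    intro x hx
    refine Submodule.span_induction ?_ ?_ ?_ ?_ hx
    · rintro _ ⟨i, rfl⟩ y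
      have hy : y = ∑ j, y j • (Pi.single j 1 : Fin b → R) := by
        funext k; simp [Pi.single_apply, Finset.sum_ite_eq]
      have : tensorRow (A i) y = ∑ j, y j • tensorRow (A i) (Pi.single j (1:R)) := by
        calc tensorRow (A i) y = tensorRowBilin (A i) y := rfl
        _ = tensorRowBilin (A i) (∑ j, y j • (Pi.single j 1 : Fin b → R)) := by rw [← hy]
        _ = ∑ j, y j • tensorRowBilin (A i) (Pi.single j (1:R)) := by
            rw [map_sum]; simp
      rw [this]
      exact Submodule.sum_mem _ fun j _ => S.smul_mem _ (hS i j)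
    · intro y
      have : tensorRow (0 : Fin a → R) y = 0 := by
        funext k; simp [tensorRow]
      rw [this]; exact S.zero_mem
    · intro u v _ _ hu hv y
      have : tensorRow (u + v) y = tensorRow u y + tensorRow v y := by
        funext k; simp [tensorRow, add_mul]
      rw [this]; exact S.add_mem (hu y) (hv y)
    · intro c u _ hu y
      have : tensorRow (c • u) y = c • tensorRow u y := by
        funext k; simp [tensorRow, mul_assoc]
      rw [this]; exact S.smul_mem _ (hu y)
  exact key x hx y

lemma tensorRow_mem_span' {a b : ℕ} {m : Type*} (L : Matrix m (Fin b) R)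
    {S : Submodule R (Fin (a * b) → R)}
    (hS : ∀ (i : Fin a) (j : m), tensorRow (Pi.single i (1:R)) (L j) ∈ S)
    (x : Fin a → R) {y : Fin b → R} (hy : y ∈ rowSpan L) :
    tensorRow x y ∈ S := by
  have key : ∀ y ∈ rowSpan L, ∀ x : Fin a → R, tensorRow x y ∈ S := by
    intro y hy
    refine Submodule.span_induction ?_ ?_ ?_ ?_ hy
    · rintro _ ⟨j, rfl⟩ x
      have hx : x = ∑ i, x i • (Pi.single i 1 : Fin a → R) := by
        funext k; simp [Pi.single_apply, Finset.sum_ite_eq]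
      have : tensorRow x (L j) = ∑ i, x i • tensorRow (Pi.single i (1:R)) (L j) := by
        calc tensorRow x (L j) = tensorRowBilin.flip (L j) x := rfl
        _ = tensorRowBilin.flip (L j) (∑ i, x i • (Pi.single i 1 : Fin a → R)) := by
            rw [← hx]
        _ = ∑ i, x i • tensorRowBilin.flip (L j) (Pi.single i (1:R)) := by
            rw [map_sum]; simp
      rw [this]
      exact Submodule.sum_mem _ fun i _ => S.smul_mem _ (hS i j)
    · intro x
      have : tensorRow x (0 : Fin b → R) = 0 := by funext k; simp [tensorRow]
      rw [this]; exact S.zero_mem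
    · intro u v _ _ hu hv x
      have : tensorRow x (u + v) = tensorRow x u + tensorRow x v := by
        funext k; simp [tensorRow, mul_add]
      rw [this]; exact S.add_mem (hu x) (hv x)
    · intro c u _ hu x
      have : tensorRow x (c • u) = c • tensorRow x u := by
        funext k; simp [tensorRow, mul_left_comm]
      rw [this]; exact S.smul_mem _ (hu x)
  exact key y hy x

lemma kron_one_row {l1 l0 l0' : ℕ} (A : Matrix (Fin l1) (Fin l0) R)
    (i : Fin l1) (j : Fin l0') :
    kron A (1 : Matrix (Fin l0') (Fin l0') R) (finProdFinEquiv (i, j))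
      = tensorRow (A i) (Pi.single j (1:R)) := by
  funext k'
  simp only [kron, Matrix.reindex_apply, Matrix.submatrix_apply, Equiv.symm_apply_apply,
    Matrix.kroneckerMap_apply, tensorRow, Matrix.one_apply, Pi.single_apply]
  simp [eq_comm]

lemma one_kron_row {l0 l1' l0' : ℕ} (L : Matrix (Fin l1') (Fin l0') R)
    (i : Fin l0) (j : Fin l1') :
    kron (1 : Matrix (Fin l0) (Fin l0) R) L (finProdFinEquiv (i, j))
      = tensorRow (Pi.single i (1:R)) (L j) := by
  funext k'
  simp only [kron, Matrix.reindex_apply, Matrix.submatrix_apply, Equiv.symm_apply_apply,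
    Matrix.kroneckerMap_apply, tensorRow, Matrix.one_apply, Pi.single_apply]
  simp [eq_comm]

end Aux

open TensorProduct in
/-- `coker(Ã) ⊗ coker(L̃)` is isomorphic to the cokernel of the stacked
matrix `T = (Ã ⊗ I over I ⊗ L̃)`, the isomorphism sending `(x+⟨Ã⟩) ⊗ (y+⟨L̃⟩)` to the
class of `x ⊗ y`. -/
theorem statement_11 {R : Type*} [CommRing R] {l1 l0 l1' l0' : ℕ}
    (A : Matrix (Fin l1) (Fin l0) R) (L : Matrix (Fin l1') (Fin l0') R) :
    let T := Matrix.fromRows (kron A (1 : Matrix (Fin l0') (Fin l0') R))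
      (kron (1 : Matrix (Fin l0) (Fin l0) R) L)
    ∃ e : ((((Fin l0 → R) ⧸ rowSpan A)) ⊗[R] ((Fin l0' → R) ⧸ rowSpan L)) ≃ₗ[R]
        ((Fin (l0 * l0') → R) ⧸ rowSpan T),
      ∀ (x : Fin l0 → R) (y : Fin l0' → R),
        e (Submodule.Quotient.mk x ⊗ₜ[R] Submodule.Quotient.mk y)
          = Submodule.Quotient.mk (tensorRow x y) := by
  intro T
  set m := rowSpan A
  set n := rowSpan L
  set g := (rowTensorEquiv l0 l0' (R := R))
  set S := (LinearMap.range (TensorProduct.map m.subtype LinearMap.id) ⊔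
      LinearMap.range (TensorProduct.map LinearMap.id n.subtype))
  have hT : rowSpan T = rowSpan (kron A (1 : Matrix (Fin l0') (Fin l0') R)) ⊔
      rowSpan (kron (1 : Matrix (Fin l0) (Fin l0) R) L) := by
    have : Set.range T = Set.range (kron A (1 : Matrix (Fin l0') (Fin l0') R)) ∪
        Set.range (kron (1 : Matrix (Fin l0) (Fin l0) R) L) :=
      Set.Sum.elim_range _ _
    rw [rowSpan, this, Submodule.span_union]; rfl
  have h1 : Submodule.map g.toLinearMap
      (LinearMap.range (TensorProduct.map m.subtype LinearMap.id)) =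
      rowSpan (kron A (1 : Matrix (Fin l0') (Fin l0') R)) := by
    rw [TensorProduct.range_map_eq_span_tmul, Submodule.map_span]
    apply le_antisymm
    · rw [Submodule.span_le]
      rintro _ ⟨_, ⟨⟨x, hx⟩, y, rfl⟩, rfl⟩
      simp only [Submodule.coe_subtype, LinearMap.id_coe, id_eq, LinearEquiv.coe_coe]
      rw [rowTensorEquiv_tmul]
      refine tensorRow_mem_span A (fun i j => ?_) hx y
      rw [← kron_one_row]
      exact Submodule.subset_span ⟨_, rfl⟩
    · rw [rowSpan, Submodule.span_le]
      rintro _ ⟨k, rfl⟩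
      obtain ⟨⟨i, j⟩, rfl⟩ := finProdFinEquiv.surjective k
      rw [kron_one_row]
      refine Submodule.subset_span ⟨(A i) ⊗ₜ[R] (Pi.single j 1 : Fin l0' → R),
        ⟨⟨A i, Submodule.subset_span ⟨i, rfl⟩⟩, Pi.single j 1, rfl⟩, ?_⟩
      exact rowTensorEquiv_tmul _ _
  have h2 : Submodule.map g.toLinearMap
      (LinearMap.range (TensorProduct.map LinearMap.id n.subtype)) =
      rowSpan (kron (1 : Matrix (Fin l0) (Fin l0) R) L) := by
    rw [TensorProduct.range_map_eq_span_tmul, Submodule.map_span]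
    apply le_antisymm
    · rw [Submodule.span_le]
      rintro _ ⟨_, ⟨x, ⟨y, hy⟩, rfl⟩, rfl⟩
      simp only [Submodule.coe_subtype, LinearMap.id_coe, id_eq, LinearEquiv.coe_coe]
      rw [rowTensorEquiv_tmul]
      refine tensorRow_mem_span' L (fun i j => ?_) x hy
      rw [← one_kron_row]
      exact Submodule.subset_span ⟨_, rfl⟩
    · rw [rowSpan, Submodule.span_le]
      rintro _ ⟨k, rfl⟩
      obtain ⟨⟨i, j⟩, rfl⟩ := finProdFinEquiv.surjective k
      rw [one_kron_row]
      refine Submodule.subset_span ⟨(Pi.single i 1 : Fin l0 → R) ⊗ₜ[R] (L j),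
        ⟨Pi.single i 1, ⟨L j, Submodule.subset_span ⟨j, rfl⟩⟩, rfl⟩, ?_⟩
      exact rowTensorEquiv_tmul _ _
  have hmap : Submodule.map g.toLinearMap S = rowSpan T := by
    rw [Submodule.map_sup, h1, h2, hT]
  refine ⟨(TensorProduct.quotientTensorQuotientEquiv m n).trans
    (Submodule.Quotient.equiv S (rowSpan T) g hmap), fun x y => ?_⟩
  simp only [LinearEquiv.trans_apply,
    TensorProduct.quotientTensorQuotientEquiv_apply_tmul_mk_tmul_mk]
  have : (Submodule.Quotient.equiv S (rowSpan T) g hmap)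
      (Submodule.Quotient.mk (x ⊗ₜ[R] y)) = Submodule.Quotient.mk (g (x ⊗ₜ[R] y)) := by
    simp [Submodule.Quotient.equiv, Submodule.mapQ_apply]
  rw [this, rowTensorEquiv_tmul]
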